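/- Let b ≥ 5 be divisible by 5. If y with 0 ≤ y < b^4 has difference pair equal to one of (4b/5, 3b/5), (4b/5, 2b/5), or (2b/5, b/5), then K_b(y) ≠ F_b. -/

import Mathlib

/-- The four base-`b` digits of `x` (viewed as a 4-digit string with leading
zeros allowed), sorted in decreasing order. -/
def sortedDigits (b x : ℕ) : List ℕ :=
  List.insertionSort (· ≥ ·) [x % b, x / b % b, x / b ^ 2 % b, x / b ^ 3 % b]

/-- The 4-digit base-`b` Kaprekar function `K_b(x) = D - A`. -/
def Kap (b x : ℕ) : ℕ :=
  let l := sortedDigits b x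
  (l[0]! * b ^ 3 + l[1]! * b ^ 2 + l[2]! * b + l[3]!) -
    (l[3]! * b ^ 3 + l[2]! * b ^ 2 + l[1]! * b + l[0]!)

/-- The difference pair `(a₃ - a₀, a₂ - a₁)` of a 4-digit base-`b` input. -/
def diffPair (b x : ℕ) : ℕ × ℕ :=
  let l := sortedDigits b x
  (l[0]! - l[3]!, l[1]! - l[2]!)

/-- `S_b`: the set of 4-digit base-`b` inputs whose sequence of Kaprekar
iterates is eventually constant and nonzero. -/
def KapSet (b : ℕ) : Set ℕ :=
  {x | x < b ^ 4 ∧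
    ∃ t, (∀ s, t ≤ s → (Kap b)^[s] x = (Kap b)^[t] x) ∧ (Kap b)^[t] x ≠ 0}

/-- Arrange the two coordinates of a pair in decreasing order. -/
def sort2 (p : ℕ × ℕ) : ℕ × ℕ := (max p.1 p.2, min p.1 p.2)

/-- A base-`b` difference pair: `b - 1 ≥ d ≥ d' ≥ 0`. -/
def IsDiffPair (b : ℕ) (p : ℕ × ℕ) : Prop := p.2 ≤ p.1 ∧ p.1 ≤ b - 1

/-- The Kaprekar map on base-`b` difference pairs. -/
def Kpair (b : ℕ) (p : ℕ × ℕ) : ℕ × ℕ :=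
  if p.1 = 0 ∧ p.2 = 0 then (0, 0)
  else if p.2 = 0 then
    -- type (c)
    sort2 (p.1 - 1, b - p.1)
  else if p.1 = p.2 ∨ p.1 + p.2 = b then
    -- type (b)
    sort2 ((2 * (p.1 : ℤ) - ((b : ℤ) - 1)).natAbs,
           (2 * (p.1 : ℤ) - ((b : ℤ) + 1)).natAbs)
  else
    -- type (a)
    sort2 ((2 * (p.1 : ℤ) - (b : ℤ)).natAbs, (2 * (p.2 : ℤ) - (b : ℤ)).natAbs)

set_option maxHeartbeats 800000 in
/-- if `5 ∣ b`, `b ≥ 5` and `y` has difference pair `(4b/5, 3b/5)`,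
`(4b/5, 2b/5)`, or `(2b/5, b/5)`, then `K_b(y) ≠ F_b`. -/
theorem kaprekar_predecessor_not_fixed (b : ℕ) (hb5 : 5 ∣ b) (hb : 5 ≤ b) (y : ℕ)
    (hy : y < b ^ 4)
    (h : diffPair b y = (4 * b / 5, 3 * b / 5) ∨ diffPair b y = (4 * b / 5, 2 * b / 5) ∨
         diffPair b y = (2 * b / 5, b / 5)) :
    Kap b y ≠ (3 * b / 5) * b ^ 3 + (b / 5 - 1) * b ^ 2 + (4 * b / 5 - 1) * b + 2 * b / 5 := by
  have hsort : (sortedDigits b y).Pairwise (· ≥ ·) := List.pairwise_insertionSort _ _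
  have hlen : (sortedDigits b y).length = 4 := by
    rw [sortedDigits, List.length_insertionSort]; rfl
  obtain ⟨a, c, d, e, hl⟩ : ∃ a c d e, sortedDigits b y = [a, c, d, e] := by
    rcases hL : sortedDigits b y with _ | ⟨a, _ | ⟨c, _ | ⟨d, _ | ⟨e, _ | _⟩⟩⟩⟩ <;>
      simp_all
  rw [hl] at hsort
  simp [List.pairwise_cons] at hsort
  obtain ⟨⟨hac, -, hae⟩, ⟨hcd, -⟩, hde⟩ := hsort
  have hce : e ≤ c := le_trans hde hcd
  have hKap : Kap b y = (a * b ^ 3 + c * b ^ 2 + d * b + e) -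
      (e * b ^ 3 + d * b ^ 2 + c * b + a) := by
    simp [Kap, hl]
  have hdp : diffPair b y = (a - e, c - d) := by
    simp [diffPair, hl]
  obtain ⟨k, rfl⟩ := hb5
  have hk : 1 ≤ k := by omega
  set B := 5 * k with hB
  have hb3 : 1 ≤ B ^ 3 := Nat.one_le_pow _ _ (by omega)
  have hb2 : B ≤ B ^ 2 := Nat.le_self_pow (by omega) _
  have hle : e * B ^ 3 + d * B ^ 2 + c * B + a ≤ a * B ^ 3 + c * B ^ 2 + d * B + e := by
    zify
    nlinarith [mul_nonneg (by exact_mod_cast Int.sub_nonneg.mpr (show (e:ℤ) ≤ a by exact_mod_cast hae))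
        (by exact_mod_cast Int.sub_nonneg.mpr (show (1:ℤ) ≤ (B:ℤ)^3 by exact_mod_cast hb3)),
      mul_nonneg (by exact_mod_cast Int.sub_nonneg.mpr (show (d:ℤ) ≤ c by exact_mod_cast hcd))
        (by exact_mod_cast Int.sub_nonneg.mpr (show (B:ℤ) ≤ (B:ℤ)^2 by exact_mod_cast hb2))]
  have hKap2 : Kap B y = (a - e) * (B ^ 3 - 1) + (c - d) * (B ^ 2 - B) := by
    rw [hKap]
    zify [hle, hae, hcd, hb3, hb2]
    ring
  have hF : (3 * B / 5) * B ^ 3 + (B / 5 - 1) * B ^ 2 + (4 * B / 5 - 1) * B + 2 * B / 5 =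
      3 * k * (B ^ 3 - 1) + k * (B ^ 2 - B) := by
    have h1 : 3 * B / 5 = 3 * k := by omega
    have h2 : B / 5 = k := by omega
    have h3 : 4 * B / 5 = 4 * k := by omega
    have h4 : 2 * B / 5 = 2 * k := by omega
    rw [h1, h2, h3, h4]
    zify [hb3, hb2, hk, show 1 ≤ 4 * k by omega]
    have : (B : ℤ) = 5 * k := by exact_mod_cast hB
    rw [this]; ring
  rw [hdp] at h
  rw [hKap2, hF]
  have hP : 1 ≤ B ^ 3 - 1 := by
    have : 125 ≤ B ^ 3 := by
      calc (125 : ℕ) = 5 ^ 3 := by norm_num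
      _ ≤ B ^ 3 := Nat.pow_le_pow_left (by omega) 3
    omega
  have hkP : k ≤ k * (B ^ 3 - 1) := Nat.le_mul_of_pos_right k (by omega)
  have e1 : 4 * B / 5 = 4 * k := by omega
  have e2 : 3 * B / 5 = 3 * k := by omega
  have e3 : 2 * B / 5 = 2 * k := by omega
  have e4 : B / 5 = k := by omega
  obtain ⟨P, hPe⟩ : ∃ P, B ^ 3 - 1 = P := ⟨_, rfl⟩
  obtain ⟨Q, hQe⟩ : ∃ Q, B ^ 2 - B = Q := ⟨_, rfl⟩
  rw [hPe] at hP hkP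
  rw [hPe, hQe]
  rcases h with h | h | h <;>
    simp only [Prod.mk.injEq, e1, e2, e3, e4] at h <;>
    obtain ⟨h1, h2⟩ := h <;>
    rw [h1, h2] <;>
    intro heq <;>
    nlinarith [heq, hkP, hk]
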